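/- arXiv:1701.07652 — 2 statements merged into one kernel-verified Lean document; each statement's English description precedes it below -/
import Mathlib

section
/- Let $r$ be a positive integer and $a, \delta$ real with $0 < \delta < a/4$. There exists a function $\theta : \mathbb{R} \to \mathbb{R}$ which is $r$ times continuously differentiable, satisfies $\theta(y) = 1$ for $|y| \le a - \delta$, $0 < \theta(y) < 1$ for $a - \delta < |y| < a + \delta$, $\theta(y) = 0$ for $|y| \ge a + \delta$, and whose Fourier transform $\Theta(x) = \int_{-\infty}^{\infty} \theta(y) e^{-2\pi i x y} \, dy$ satisfies $|\Theta(x)| \le \min\left(2a, \frac{1}{|x|}\left(\frac{r}{|x|\delta}\right)^r\right)$ for all $x \ne 0$. -/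
open MeasureTheory intervalIntegral Set

namespace SegalAux

noncomputable def sm (ε : ℝ) (f : ℝ → ℝ) (y : ℝ) : ℝ :=
  (2*ε)⁻¹ * ∫ s in (y-ε)..(y+ε), f s

lemma sm_eq_primitive {ε : ℝ} {f : ℝ → ℝ}
    (hf : ∀ a b : ℝ, IntervalIntegrable f volume a b) (y : ℝ) :
    sm ε f y = (2*ε)⁻¹ * ((∫ s in (0:ℝ)..(y+ε), f s) - ∫ s in (0:ℝ)..(y-ε), f s) := by
  rw [sm]
  congr 1
  rw [← integral_add_adjacent_intervals (hf 0 (y-ε)) (hf (y-ε) (y+ε))]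
  ring

lemma sm_hasDerivAt {ε : ℝ} {f : ℝ → ℝ} (hf : Continuous f) (y : ℝ) :
    HasDerivAt (sm ε f) ((2*ε)⁻¹ * (f (y+ε) - f (y-ε))) y := by
  have hii : ∀ a b : ℝ, IntervalIntegrable f volume a b :=
    fun a b => hf.intervalIntegrable a b
  have h1 : HasDerivAt (fun u : ℝ => ∫ s in (0:ℝ)..(u+ε), f s) (f (y+ε)) y := by
    have := (integral_hasDerivAt_right (hii 0 (y+ε))
      (hf.stronglyMeasurableAtFilter _ _) hf.continuousAt)
    have h2 : HasDerivAt (fun u : ℝ => u + ε) 1 y := (hasDerivAt_id y).add_const ε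
    simpa [Function.comp_def] using this.comp y h2
  have h1' : HasDerivAt (fun u : ℝ => ∫ s in (0:ℝ)..(u-ε), f s) (f (y-ε)) y := by
    have := (integral_hasDerivAt_right (hii 0 (y-ε))
      (hf.stronglyMeasurableAtFilter _ _) hf.continuousAt)
    have h2 : HasDerivAt (fun u : ℝ => u - ε) 1 y := (hasDerivAt_id y).sub_const ε
    simpa [Function.comp_def] using this.comp y h2
  have := ((h1.sub h1').const_mul ((2*ε)⁻¹))
  have heq : (fun u : ℝ => (2*ε)⁻¹ * ((∫ s in (0:ℝ)..(u+ε), f s) - ∫ s in (0:ℝ)..(u-ε), f s))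
      = sm ε f := funext fun u => (sm_eq_primitive hii u).symm
  rw [← heq]
  exact this

lemma sm_contDiff_iter {ε : ℝ} {f : ℝ → ℝ} (hf : Continuous f) :
    ∀ n : ℕ, ContDiff ℝ n ((sm ε)^[n] f) := by
  intro n
  induction n generalizing f with
  | zero => simpa [contDiff_zero] using hf
  | succ n ih =>
    rw [Function.iterate_succ_apply']
    set g := (sm ε)^[n] f with hg
    have hgc : ContDiff ℝ n g := ih hf
    simp only [Nat.cast_add, Nat.cast_one]
    rw [contDiff_succ_iff_deriv]
    constructor
    · exact fun y => (sm_hasDerivAt hgc.continuous y).differentiableAt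
    · have : deriv (sm ε g) = fun y => (2*ε)⁻¹ * (g (y+ε) - g (y-ε)) :=
        funext fun y => (sm_hasDerivAt hgc.continuous y).deriv
      rw [this]
      refine ⟨by simp, ?_⟩
      exact contDiff_const.mul
        ((hgc.comp (contDiff_id.add contDiff_const)).sub (hgc.comp (contDiff_id.sub contDiff_const)))


section values

variable {ε m m' : ℝ} {f : ℝ → ℝ}

lemma sm_nonneg (hε : 0 < ε) (h0 : ∀ s, 0 ≤ f s) (y : ℝ) : 0 ≤ sm ε f y := by
  have : (0:ℝ) ≤ ∫ s in (y-ε)..(y+ε), f s :=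
    intervalIntegral.integral_nonneg (by linarith) (fun u _ => h0 u)
  have h2 : (0:ℝ) < (2*ε)⁻¹ := by positivity
  exact mul_nonneg h2.le this

lemma sm_le_one (hε : 0 < ε) (hii : ∀ a b : ℝ, IntervalIntegrable f volume a b)
    (h1 : ∀ s, f s ≤ 1) (y : ℝ) : sm ε f y ≤ 1 := by
  have hle : y - ε ≤ y + ε := by linarith
  have : (∫ s in (y-ε)..(y+ε), f s) ≤ ∫ s in (y-ε)..(y+ε), (1:ℝ) :=
    intervalIntegral.integral_mono_on hle (hii _ _) (intervalIntegrable_const)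
      (fun u _ => h1 u)
  rw [intervalIntegral.integral_const] at this
  have h2 : (0:ℝ) < (2*ε)⁻¹ := by positivity
  calc sm ε f y ≤ (2*ε)⁻¹ * ((y + ε - (y - ε)) • (1:ℝ)) := by
        exact mul_le_mul_of_nonneg_left this h2.le
    _ = 1 := by field_simp; ring

lemma sm_eq_one_of (hε : 0 < ε) (hm : ∀ s : ℝ, |s| ≤ m → f s = 1) {y : ℝ}
    (hy : |y| ≤ m - ε) : sm ε f y = 1 := by
  obtain ⟨hy1, hy2⟩ := abs_le.mp hy
  have : (∫ s in (y-ε)..(y+ε), f s) = ∫ s in (y-ε)..(y+ε), (1:ℝ) := by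
    apply intervalIntegral.integral_congr
    intro s hs
    rw [Set.uIcc_of_le (by linarith : y - ε ≤ y + ε)] at hs
    exact hm s (abs_le.mpr ⟨by linarith [hs.1], by linarith [hs.2]⟩)
  rw [sm, this, intervalIntegral.integral_const]
  field_simp
  ring

lemma sm_eq_zero_of (hε : 0 < ε) (hm : ∀ s : ℝ, m ≤ |s| → f s = 0) {y : ℝ}
    (hy : m + ε ≤ |y|) : sm ε f y = 0 := by
  have : (∫ s in (y-ε)..(y+ε), f s) = ∫ s in (y-ε)..(y+ε), (0:ℝ) := by
    apply intervalIntegral.integral_congr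
    intro s hs
    rw [Set.uIcc_of_le (by linarith : y - ε ≤ y + ε)] at hs
    apply hm s
    rcases le_or_gt 0 y with hy0 | hy0
    · rw [abs_of_nonneg hy0] at hy
      calc m ≤ s := by linarith [hs.1]
        _ ≤ |s| := le_abs_self s
    · rw [abs_of_neg hy0] at hy
      calc m ≤ -s := by linarith [hs.2]
        _ ≤ |s| := neg_le_abs s
  rw [sm, this, intervalIntegral.integral_zero, mul_zero]

lemma sm_eq_zero_of' {ε m : ℝ} {f : ℝ → ℝ} (hε : 0 < ε)
    (hii : ∀ a b : ℝ, IntervalIntegrable f volume a b)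
    (hm : ∀ s : ℝ, m < |s| → f s = 0) {y : ℝ}
    (hy : m + ε ≤ |y|) : sm ε f y = 0 := by
  have key : (∫ s in (y-ε)..(y+ε), f s) = ∫ s in (y-ε)..(y+ε), (0:ℝ) := by
    apply intervalIntegral.integral_congr_ae
    have hsing : ∀ᵐ t : ℝ, t ∉ ({-m, m} : Set ℝ) := by
      apply MeasureTheory.measure_eq_zero_iff_ae_notMem.mp
      exact ((Set.finite_singleton m).insert (-m)).measure_zero volume
    filter_upwards [hsing] with t ht htI
    rw [Set.uIoc_of_le (by linarith : y - ε ≤ y + ε)] at htI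
    apply hm t
    rcases le_or_gt 0 y with hy0 | hy0
    · rw [abs_of_nonneg hy0] at hy
      calc m ≤ y - ε := by linarith
        _ < t := htI.1
        _ ≤ |t| := by
            refine le_abs_self t
    · rw [abs_of_neg hy0] at hy
      have h1 : t ≤ -m := by linarith [htI.2]
      have h2 : m ≤ -t := by linarith
      rcases lt_or_eq_of_le h2 with h | h
      · calc m < -t := h
          _ ≤ |t| := neg_le_abs t
      · exfalso
        apply ht
        have : t = -m := by linarith
        rw [this]
        simp
  rw [sm, key, intervalIntegral.integral_zero, mul_zero]

lemma sm_pos_of_sub (hε : 0 < ε) (hii : ∀ a b : ℝ, IntervalIntegrable f volume a b)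
    (h0 : ∀ s, 0 ≤ f s) {y c d : ℝ} (hc : y - ε ≤ c) (hcd : c < d) (hd : d ≤ y + ε)
    (hpos : 0 < ∫ s in c..d, f s) : 0 < sm ε f y := by
  have e1 : (∫ s in (y-ε)..c, f s) + ∫ s in c..(y+ε), f s = ∫ s in (y-ε)..(y+ε), f s :=
    intervalIntegral.integral_add_adjacent_intervals (hii _ _) (hii _ _)
  have e2 : (∫ s in c..d, f s) + ∫ s in d..(y+ε), f s = ∫ s in c..(y+ε), f s :=
    intervalIntegral.integral_add_adjacent_intervals (hii _ _) (hii _ _)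
  have n1 : (0:ℝ) ≤ ∫ s in (y-ε)..c, f s :=
    intervalIntegral.integral_nonneg hc (fun u _ => h0 u)
  have n2 : (0:ℝ) ≤ ∫ s in d..(y+ε), f s :=
    intervalIntegral.integral_nonneg hd (fun u _ => h0 u)
  have : (0:ℝ) < ∫ s in (y-ε)..(y+ε), f s := by
    rw [← e1, ← e2]; linarith
  have h2 : (0:ℝ) < (2*ε)⁻¹ := by positivity
  exact mul_pos h2 this

lemma sm_pos (hε : 0 < ε) (hm : 0 < m)
    (hii : ∀ a b : ℝ, IntervalIntegrable f volume a b) (h0 : ∀ s, 0 ≤ f s)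
    (hpos : ∀ c d : ℝ, c < d → (∀ t ∈ Set.Ioo c d, |t| < m) → 0 < ∫ s in c..d, f s)
    {y : ℝ} (hy : |y| < m + ε) : 0 < sm ε f y := by
  obtain ⟨hy1, hy2⟩ := abs_lt.mp hy
  set c := max (y - ε) (-m) with hcdef
  set d := min (y + ε) m with hddef
  have hcd : c < d := by
    apply max_lt <;> [skip; skip] <;> apply lt_min <;> linarith
  refine sm_pos_of_sub hε hii h0 (le_max_left _ _) hcd (min_le_left _ _) ?_
  apply hpos c d hcd
  intro t ht
  have h1 : -m < t := lt_of_le_of_lt (le_max_right _ _) ht.1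
  have h2 : t < m := lt_of_lt_of_le ht.2 (min_le_right _ _)
  exact abs_lt.mpr ⟨h1, h2⟩

lemma sm_pos_tail (hε : 0 < ε) (hm : 0 ≤ m')
    (hii : ∀ a b : ℝ, IntervalIntegrable f volume a b) (h0 : ∀ s, 0 ≤ f s)
    (hpos : ∀ c d : ℝ, c < d → (∀ t ∈ Set.Ioo c d, m' < |t|) → 0 < ∫ s in c..d, f s)
    {y : ℝ} (hy : m' - ε < |y|) : 0 < sm ε f y := by
  rcases le_or_gt 0 y with hy0 | hy0
  · rw [abs_of_nonneg hy0] at hy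
    have hcd : max (y - ε) m' < y + ε := max_lt (by linarith) (by linarith)
    refine sm_pos_of_sub hε hii h0 (le_max_left _ _) hcd le_rfl ?_
    apply hpos _ _ hcd
    intro t ht
    have h1 : m' ≤ t := le_of_lt (lt_of_le_of_lt (le_max_right _ _) ht.1)
    have h1' : m' < t := lt_of_le_of_lt (le_max_right _ _) ht.1
    calc m' < t := h1'
      _ ≤ |t| := le_abs_self t
  · rw [abs_of_neg hy0] at hy
    have hcd : y - ε < min (y + ε) (-m') := lt_min (by linarith) (by linarith)
    refine sm_pos_of_sub hε hii h0 le_rfl hcd (min_le_left _ _) ?_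
    apply hpos _ _ hcd
    intro t ht
    have h2 : t < -m' := lt_of_lt_of_le ht.2 (min_le_right _ _)
    calc m' < -t := by linarith
      _ ≤ |t| := neg_le_abs t

lemma sm_one_sub (hε : 0 < ε) (hii : ∀ a b : ℝ, IntervalIntegrable f volume a b) (y : ℝ) :
    sm ε (fun s => 1 - f s) y = 1 - sm ε f y := by
  rw [sm, sm, intervalIntegral.integral_sub intervalIntegrable_const (hii _ _),
    intervalIntegral.integral_const]
  field_simp
  ring

end values

section fourier

open Complex

noncomputable def Fi (f : ℝ → ℝ) (x : ℝ) : ℂ :=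
  ∫ y : ℝ, (f y : ℂ) * Complex.exp (-(2 * Real.pi * Complex.I * x * y))

noncomputable def Kf (ε x : ℝ) : ℂ :=
  ((2*ε : ℝ) : ℂ)⁻¹ * ∫ s in (-ε)..ε, Complex.exp (2 * Real.pi * Complex.I * x * s)

lemma norm_exp_re_zero {z : ℂ} (h : z.re = 0) : ‖Complex.exp z‖ = 1 := by
  rw [Complex.norm_exp, h, Real.exp_zero]

lemma Kf_norm_le_one {ε : ℝ} (hε : 0 < ε) (x : ℝ) : ‖Kf ε x‖ ≤ 1 := by
  rw [Kf, norm_mul]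
  have h1 : ‖((2*ε : ℝ) : ℂ)⁻¹‖ = (2*ε)⁻¹ := by
    rw [norm_inv, Complex.norm_real, Real.norm_eq_abs, abs_of_pos (by linarith)]
  have h2 : ‖∫ s in (-ε)..ε, Complex.exp (2 * Real.pi * Complex.I * x * s)‖ ≤ 2*ε := by
    have hb : ∀ s ∈ Set.uIoc (-ε) ε,
        ‖Complex.exp (2 * Real.pi * Complex.I * x * s)‖ ≤ 1 := by
      intro s _
      rw [norm_exp_re_zero (by simp [Complex.mul_re, Complex.mul_im])]
    have := intervalIntegral.norm_integral_le_of_norm_le_const hb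
    calc ‖∫ s in (-ε)..ε, Complex.exp (2 * Real.pi * Complex.I * x * s)‖
        ≤ 1 * |ε - (-ε)| := this
      _ = 2*ε := by rw [abs_of_pos (by linarith)]; ring
  rw [h1]
  calc (2*ε)⁻¹ * ‖∫ s in (-ε)..ε, Complex.exp (2 * Real.pi * Complex.I * x * s)‖
      ≤ (2*ε)⁻¹ * (2*ε) := by
        apply mul_le_mul_of_nonneg_left h2 (by positivity)
    _ = 1 := by field_simp

lemma Kf_norm_le {ε x : ℝ} (hε : 0 < ε) (hx : x ≠ 0) :
    ‖Kf ε x‖ ≤ 1 / (2 * Real.pi * ε * |x|) := by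
  have hπ := Real.pi_pos
  have hx' : 0 < |x| := abs_pos.mpr hx
  set c : ℂ := 2 * (Real.pi : ℂ) * Complex.I * (x : ℂ) with hc_def
  have hcnorm : ‖c‖ = 2 * Real.pi * |x| := by
    rw [hc_def]
    simp only [norm_mul, Complex.norm_ofNat, Complex.norm_real, Complex.norm_I,
      Real.norm_eq_abs, abs_of_pos hπ]
    ring
  have hc : c ≠ 0 := by
    intro h
    rw [h, norm_zero] at hcnorm
    have : (0:ℝ) < 2 * Real.pi * |x| := by positivity
    linarith
  have hKf : Kf ε x = ((2*ε : ℝ) : ℂ)⁻¹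
      * ((Complex.exp (c * ε) - Complex.exp (c * (-ε : ℝ))) / c) := by
    rw [Kf]
    congr 1
    rw [← integral_exp_mul_complex hc]
  rw [hKf, norm_mul, norm_div, hcnorm]
  have h1 : ‖((2*ε : ℝ) : ℂ)⁻¹‖ = (2*ε)⁻¹ := by
    rw [norm_inv, Complex.norm_real, Real.norm_eq_abs, abs_of_pos (by linarith)]
  have h2 : ‖Complex.exp (c * ε) - Complex.exp (c * (-ε : ℝ))‖ ≤ 2 := by
    apply le_trans (norm_sub_le _ _)
    rw [norm_exp_re_zero (by simp [hc_def, Complex.mul_re, Complex.mul_im]),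
      norm_exp_re_zero (by simp [hc_def, Complex.mul_re, Complex.mul_im])]
    norm_num
  rw [h1]
  calc (2*ε)⁻¹ * (‖Complex.exp (c * ε) - Complex.exp (c * (-ε : ℝ))‖ / (2 * Real.pi * |x|))
      ≤ (2*ε)⁻¹ * (2 / (2 * Real.pi * |x|)) := by gcongr
    _ = 1 / (2 * Real.pi * ε * |x|) := by field_simp

lemma sm_continuous {ε : ℝ} {f : ℝ → ℝ}
    (hii : ∀ a b : ℝ, IntervalIntegrable f volume a b) : Continuous (sm ε f) := by
  have hP : Continuous (fun u : ℝ => ∫ s in (0:ℝ)..u, f s) :=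
    intervalIntegral.continuous_primitive hii 0
  have : Continuous (fun y : ℝ =>
      (2*ε)⁻¹ * ((∫ s in (0:ℝ)..(y+ε), f s) - ∫ s in (0:ℝ)..(y-ε), f s)) :=
    continuous_const.mul ((hP.comp (continuous_id.add continuous_const)).sub
      (hP.comp (continuous_id.sub continuous_const)))
  convert this using 1
  funext y
  exact sm_eq_primitive hii y

lemma Fi_sm {ε M : ℝ} (hε : 0 < ε) (hM : 0 ≤ M) {f : ℝ → ℝ} (hmeas : Measurable f)
    (hbd : ∀ u, |f u| ≤ 1) (hsupp : ∀ u : ℝ, M < |u| → f u = 0) (x : ℝ) :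
    Fi (sm ε f) x = Kf ε x * Fi f x := by
  classical
  set e : ℝ → ℂ := fun u => Complex.exp (-(2 * Real.pi * Complex.I * x * u)) with he_def
  have he_cont : Continuous e := by
    apply Complex.continuous_exp.comp
    continuity
  have he_norm : ∀ u : ℝ, ‖e u‖ = 1 := by
    intro u
    apply norm_exp_re_zero
    simp [he_def, Complex.mul_re, Complex.mul_im]
  have he_mul : ∀ y s : ℝ, e y = Complex.exp (2 * Real.pi * Complex.I * x * s) * e (s + y) := by
    intro y s
    have harg : (2 * Real.pi * Complex.I * x * s : ℂ)
        + (-(2 * Real.pi * Complex.I * x * ((s + y : ℝ) : ℂ))) =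
        -(2 * Real.pi * Complex.I * x * (y : ℂ)) := by
      push_cast
      ring
    simp only [he_def]
    rw [← harg, Complex.exp_add]
  have hii : ∀ a b : ℝ, IntervalIntegrable f volume a b := by
    intro a b
    apply IntervalIntegrable.mono_fun' (g := fun _ => (1:ℝ)) intervalIntegrable_const
      hmeas.aestronglyMeasurable.restrict
    exact Filter.Eventually.of_forall (fun u => by
      simpa [Real.norm_eq_abs] using hbd u)
  -- Step 1 : pointwise rewriting of the integrand
  have step1 : ∀ y : ℝ, (sm ε f y : ℂ) * e y
      = ∫ s in Set.Ioc (-ε) ε, ((2*ε : ℝ) : ℂ)⁻¹ * (f (s + y) : ℂ) * e y := by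
    intro y
    have c1 : ((∫ s in (y-ε)..(y+ε), f s : ℝ) : ℂ) = ∫ s in (y-ε)..(y+ε), (f s : ℂ) := by
      exact (RCLike.intervalIntegral_ofReal (𝕜 := ℂ)).symm
    have c2 : (∫ s in (y-ε)..(y+ε), (f s : ℂ)) = ∫ s in (-ε)..ε, (f (s + y) : ℂ) := by
      rw [intervalIntegral.integral_comp_add_right (fun s : ℝ => (f s : ℂ)) y]
      congr 1 <;> ring
    have c3 : (∫ s in (-ε)..ε, (f (s + y) : ℂ)) = ∫ s in Set.Ioc (-ε) ε, (f (s + y) : ℂ) :=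
      intervalIntegral.integral_of_le (by linarith)
    rw [sm]
    push_cast
    rw [c1, c2, c3, ← MeasureTheory.integral_const_mul, ← MeasureTheory.integral_mul_const]
  -- the product function
  set g : ℝ × ℝ → ℂ := fun p => Set.indicator (Set.univ ×ˢ Set.Ioc (-ε) ε)
    (fun q => ((2*ε : ℝ) : ℂ)⁻¹ * (f (q.2 + q.1) : ℂ) * e q.1) p with hg_def
  have hg_eq : ∀ y : ℝ, (∫ s in Set.Ioc (-ε) ε, ((2*ε : ℝ) : ℂ)⁻¹ * (f (s + y) : ℂ) * e y)
      = ∫ s : ℝ, g (y, s) := by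
    intro y
    rw [← MeasureTheory.integral_indicator measurableSet_Ioc]
    congr 1
    funext s
    by_cases hs : s ∈ Set.Ioc (-ε) ε
    · simp only [hg_def]
      rw [Set.indicator_of_mem hs, Set.indicator_of_mem (Set.mem_prod.mpr ⟨Set.mem_univ y, hs⟩)]
    · simp only [hg_def]
      rw [Set.indicator_of_notMem hs,
        Set.indicator_of_notMem (fun hmem => hs (Set.mem_prod.mp hmem).2)]
  -- integrability of g
  have hg_meas : AEStronglyMeasurable g (volume.prod volume) := by
    apply Measurable.aestronglyMeasurable
    apply Measurable.indicator
    · apply Measurable.mul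
      · apply Measurable.mul measurable_const
        exact Complex.measurable_ofReal.comp (hmeas.comp (measurable_snd.add measurable_fst))
      · exact (he_cont.comp continuous_fst).measurable
    · exact MeasurableSet.univ.prod measurableSet_Ioc
  have hg_bd : ∀ p : ℝ × ℝ, ‖g p‖ ≤ (2*ε)⁻¹ := by
    intro p
    refine le_trans (norm_indicator_le_norm_self _ _) ?_
    rw [norm_mul, norm_mul, he_norm, mul_one]
    have h1 : ‖((2*ε : ℝ) : ℂ)⁻¹‖ = (2*ε)⁻¹ := by
      rw [norm_inv, Complex.norm_real, Real.norm_eq_abs, abs_of_pos (by linarith)]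
    have h2 : ‖(f (p.2 + p.1) : ℂ)‖ ≤ 1 := by
      rw [Complex.norm_real, Real.norm_eq_abs]; exact hbd _
    calc ‖((2*ε : ℝ) : ℂ)⁻¹‖ * ‖(f (p.2 + p.1) : ℂ)‖ ≤ ‖((2*ε : ℝ) : ℂ)⁻¹‖ * 1 := by
          apply mul_le_mul_of_nonneg_left h2 (norm_nonneg _)
      _ = (2*ε)⁻¹ := by rw [mul_one, h1]
  have hg_supp : Function.support g ⊆ Set.Icc (-(M+ε)) (M+ε) ×ˢ Set.Icc (-ε) ε := by
    intro p hp
    by_contra hnot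
    apply hp
    by_cases hs : p.2 ∈ Set.Ioc (-ε) ε
    · have hsIcc : p.2 ∈ Set.Icc (-ε) ε := Set.Ioc_subset_Icc_self hs
      have h1 : p.1 ∉ Set.Icc (-(M+ε)) (M+ε) := by
        intro h
        exact hnot (Set.mem_prod.mpr ⟨h, hsIcc⟩)
      have habs : M + ε < |p.1| := by
        by_contra hle
        push_neg at hle
        exact h1 (Set.mem_Icc.mpr (abs_le.mp hle))
      have hfz : f (p.2 + p.1) = 0 := by
        apply hsupp
        have h2 : |p.2| ≤ ε := abs_le.mpr ⟨hsIcc.1, hsIcc.2⟩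
        have := abs_sub_abs_le_abs_sub (p.1) (-(p.2))
        have h3 : |p.1| - |p.2| ≤ |p.2 + p.1| := by
          have := abs_add_le p.2 p.1
          have h4 := abs_add_le (p.2 + p.1) (-p.2)
          simp only [add_neg_cancel_comm] at h4
          rw [abs_neg] at h4
          linarith
        linarith
      simp only [hg_def]
      apply Set.indicator_apply_eq_zero.mpr
      intro _
      rw [hfz]
      simp
    · simp only [hg_def]
      exact Set.indicator_of_notMem (fun hmem => hs (Set.mem_prod.mp hmem).2) _
  have hg_int : Integrable g (volume.prod volume) := by
    rw [← MeasureTheory.integrableOn_iff_integrable_of_support_subset hg_supp]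
    apply Measure.integrableOn_of_bounded
    · rw [Measure.prod_prod, Real.volume_Icc, Real.volume_Icc]
      exact ENNReal.mul_ne_top ENNReal.ofReal_ne_top ENNReal.ofReal_ne_top
    · exact hg_meas
    · exact Filter.Eventually.of_forall (fun p => hg_bd p)
  -- Fubini
  have swap : Fi (sm ε f) x = ∫ s : ℝ, ∫ y : ℝ, g (y, s) := by
    rw [Fi]
    have : (∫ y : ℝ, (sm ε f y : ℂ) * e y) = ∫ y : ℝ, ∫ s : ℝ, g (y, s) := by
      congr 1
      funext y
      rw [step1 y, hg_eq y]
    rw [show (∫ y : ℝ, (sm ε f y : ℂ) * Complex.exp (-(2 * Real.pi * Complex.I * x * y)))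
        = ∫ y : ℝ, (sm ε f y : ℂ) * e y from rfl, this]
    exact MeasureTheory.integral_integral_swap hg_int
  -- inner integral
  have inner : ∀ s : ℝ, (∫ y : ℝ, g (y, s))
      = Set.indicator (Set.Ioc (-ε) ε)
        (fun s => ((2*ε : ℝ) : ℂ)⁻¹ * Complex.exp (2 * Real.pi * Complex.I * x * s) * Fi f x) s := by
    intro s
    by_cases hs : s ∈ Set.Ioc (-ε) ε
    · rw [Set.indicator_of_mem hs]
      have : (fun y : ℝ => g (y, s))
          = fun y : ℝ => (((2*ε : ℝ) : ℂ)⁻¹ * Complex.exp (2 * Real.pi * Complex.I * x * s))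
              * ((f (s + y) : ℂ) * e (s + y)) := by
        funext y
        simp only [hg_def]
        rw [Set.indicator_of_mem (Set.mem_prod.mpr ⟨Set.mem_univ y, hs⟩), he_mul y s]
        ring
      rw [this, MeasureTheory.integral_const_mul]
      have htrans : (∫ y : ℝ, (f (s + y) : ℂ) * e (s + y)) = ∫ y : ℝ, (f y : ℂ) * e y :=
        MeasureTheory.integral_add_left_eq_self (μ := volume) (fun y => (f y : ℂ) * e y) s
      rw [htrans]
      rw [show Fi f x = ∫ y : ℝ, (f y : ℂ) * e y from rfl]
    · rw [Set.indicator_of_notMem hs]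
      have : (fun y : ℝ => g (y, s)) = fun _ : ℝ => (0:ℂ) := by
        funext y
        simp only [hg_def]
        exact Set.indicator_of_notMem (fun hmem => hs (Set.mem_prod.mp hmem).2) _
      rw [this, MeasureTheory.integral_zero]
  rw [swap]
  have : (∫ s : ℝ, ∫ y : ℝ, g (y, s))
      = ∫ s in Set.Ioc (-ε) ε,
          ((2*ε : ℝ) : ℂ)⁻¹ * Complex.exp (2 * Real.pi * Complex.I * x * s) * Fi f x := by
    rw [← MeasureTheory.integral_indicator measurableSet_Ioc]
    congr 1
    funext s
    exact inner s
  rw [this, MeasureTheory.integral_mul_const, MeasureTheory.integral_const_mul, Kf,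
    intervalIntegral.integral_of_le (by linarith : -ε ≤ ε)]

end fourier

section base

noncomputable def ind (a : ℝ) : ℝ → ℝ := Set.indicator (Set.Icc (-a) a) (fun _ => (1:ℝ))

lemma ind_meas (a : ℝ) : Measurable (ind a) :=
  measurable_const.indicator measurableSet_Icc

lemma ind_nonneg (a : ℝ) (s : ℝ) : 0 ≤ ind a s :=
  Set.indicator_nonneg (fun _ _ => zero_le_one) s

lemma ind_le_one (a : ℝ) (s : ℝ) : ind a s ≤ 1 := by
  by_cases h : s ∈ Set.Icc (-a) a
  · rw [ind, Set.indicator_of_mem h]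
  · rw [ind, Set.indicator_of_notMem h]; exact zero_le_one

lemma ind_eq_one {a s : ℝ} (h : |s| ≤ a) : ind a s = 1 :=
  Set.indicator_of_mem (Set.mem_Icc.mpr (abs_le.mp h)) _

lemma ind_eq_zero {a s : ℝ} (h : a < |s|) : ind a s = 0 := by
  apply Set.indicator_of_notMem
  intro hmem
  exact absurd (abs_le.mpr (Set.mem_Icc.mp hmem)) (not_le.mpr h)

lemma ind_ii (a : ℝ) : ∀ c d : ℝ, IntervalIntegrable (ind a) volume c d := by
  intro c d
  apply IntervalIntegrable.mono_fun' (g := fun _ => (1:ℝ)) intervalIntegrable_const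
    (ind_meas a).aestronglyMeasurable.restrict
  apply Filter.Eventually.of_forall
  intro u
  simp only [Real.norm_eq_abs]
  rw [abs_of_nonneg (ind_nonneg a u)]
  exact ind_le_one a u

lemma interval_subset_abs_lt {a c d : ℝ} (hcd : c < d)
    (h : ∀ t ∈ Set.Ioo c d, |t| < a) : ∀ t ∈ Set.Icc c d, |t| ≤ a := by
  have hc : -a ≤ c := by
    by_contra hlt
    push_neg at hlt
    have h1 : c < min d (-a) := lt_min hcd hlt
    set t := (c + min d (-a))/2 with ht_def
    have ht1 : c < t := by rw [ht_def]; linarith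
    have ht2 : t < min d (-a) := by rw [ht_def]; linarith
    have hmem := h t ⟨ht1, lt_of_lt_of_le ht2 (min_le_left _ _)⟩
    have h3 : t < -a := lt_of_lt_of_le ht2 (min_le_right _ _)
    rw [abs_lt] at hmem
    linarith [hmem.1]
  have hd : d ≤ a := by
    by_contra hlt
    push_neg at hlt
    have h1 : max c a < d := max_lt hcd hlt
    set t := (max c a + d)/2 with ht_def
    have ht1 : max c a < t := by rw [ht_def]; linarith
    have ht2 : t < d := by rw [ht_def]; linarith
    have hmem := h t ⟨lt_of_le_of_lt (le_max_left _ _) ht1, ht2⟩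
    have h3 : a < t := lt_of_le_of_lt (le_max_right _ _) ht1
    rw [abs_lt] at hmem
    linarith [hmem.2]
  intro t ht
  exact abs_le.mpr ⟨by linarith [ht.1], by linarith [ht.2]⟩

lemma interval_subset_abs_gt {a c d : ℝ} (ha : 0 < a) (hcd : c < d)
    (h : ∀ t ∈ Set.Ioo c d, a < |t|) : d ≤ -a ∨ a ≤ c := by
  by_contra hn
  push_neg at hn
  obtain ⟨h1, h2⟩ := hn
  have hlt : max c (-a) < min d a := by
    apply max_lt <;> apply lt_min <;> linarith
  set t := (max c (-a) + min d a)/2 with ht_def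
  have ht1 : max c (-a) < t := by rw [ht_def]; linarith
  have ht2 : t < min d a := by rw [ht_def]; linarith
  have hmem := h t ⟨lt_of_le_of_lt (le_max_left _ _) ht1, lt_of_lt_of_le ht2 (min_le_left _ _)⟩
  have hta : -a < t := lt_of_le_of_lt (le_max_right _ _) ht1
  have htb : t < a := lt_of_lt_of_le ht2 (min_le_right _ _)
  exact absurd hmem (not_lt.mpr (abs_le.mpr ⟨by linarith, htb.le⟩))

lemma ind_integral_pos {a c d : ℝ} (hcd : c < d)
    (h : ∀ t ∈ Set.Ioo c d, |t| < a) : 0 < ∫ t in c..d, ind a t := by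
  have h1 : (∫ t in c..d, ind a t) = ∫ t in c..d, (1:ℝ) := by
    apply intervalIntegral.integral_congr
    intro t ht
    rw [Set.uIcc_of_le hcd.le] at ht
    exact ind_eq_one (interval_subset_abs_lt hcd h t ht)
  rw [h1, intervalIntegral.integral_const, smul_eq_mul, mul_one]
  linarith

lemma ind_one_sub_integral_pos {a c d : ℝ} (ha : 0 < a) (hcd : c < d)
    (h : ∀ t ∈ Set.Ioo c d, a < |t|) : 0 < ∫ t in c..d, (1 - ind a t) := by
  have h1 : (∫ t in c..d, (1 - ind a t)) = ∫ t in c..d, (1:ℝ) := by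
    apply intervalIntegral.integral_congr_ae
    have hsing : ∀ᵐ t : ℝ, t ∉ ({-a, a} : Set ℝ) := by
      apply MeasureTheory.measure_eq_zero_iff_ae_notMem.mp
      exact ((Set.finite_singleton a).insert (-a)).measure_zero volume
    filter_upwards [hsing] with t ht htI
    rw [Set.uIoc_of_le hcd.le] at htI
    have h2 : a ≤ |t| := by
      rcases interval_subset_abs_gt ha hcd h with hcase | hcase
      · have : t ≤ -a := le_trans htI.2 hcase
        calc a ≤ -t := by linarith
          _ ≤ |t| := neg_le_abs t
      · have : a < t := lt_of_le_of_lt hcase htI.1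
        calc a ≤ t := this.le
          _ ≤ |t| := le_abs_self t
    have h3 : a < |t| := by
      rcases lt_or_eq_of_le h2 with h | h
      · exact h
      · exfalso
        rcases abs_eq (le_of_lt ha) |>.mp h.symm with h | h
        · exact ht (by rw [h]; simp)
        · exact ht (by rw [h]; simp)
    rw [ind_eq_zero h3, sub_zero]
  rw [h1, intervalIntegral.integral_const, smul_eq_mul, mul_one]
  linarith

lemma Fi_ind_eq {a : ℝ} (x : ℝ) :
    Fi (ind a) x = ∫ y in Set.Icc (-a) a, Complex.exp (-(2 * Real.pi * Complex.I * x * y)) := by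
  rw [Fi, ← MeasureTheory.integral_indicator measurableSet_Icc]
  congr 1
  funext y
  by_cases h : y ∈ Set.Icc (-a) a
  · rw [Set.indicator_of_mem h, ind, Set.indicator_of_mem h]
    norm_num
  · rw [Set.indicator_of_notMem h, ind, Set.indicator_of_notMem h]
    norm_num

lemma Fi_ind_le_two_a {a : ℝ} (ha : 0 < a) (x : ℝ) : ‖Fi (ind a) x‖ ≤ 2 * a := by
  rw [Fi_ind_eq]
  have h := MeasureTheory.norm_setIntegral_le_of_norm_le_const (C := 1)
    (s := Set.Icc (-a) a) (μ := volume)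
    (f := fun y : ℝ => Complex.exp (-(2 * Real.pi * Complex.I * x * y)))
    (by rw [Real.volume_Icc]; exact ENNReal.ofReal_lt_top)
    (fun y _ => le_of_eq (norm_exp_re_zero (by simp [Complex.mul_re, Complex.mul_im])))
  calc ‖∫ y in Set.Icc (-a) a, Complex.exp (-(2 * Real.pi * Complex.I * x * y))‖
      ≤ 1 * (volume (Set.Icc (-a) a)).toReal := h
    _ = 2 * a := by
        rw [Real.volume_Icc, ENNReal.toReal_ofReal (by linarith)]
        ring

lemma Fi_ind_le_inv {a x : ℝ} (ha : 0 < a) (hx : x ≠ 0) :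
    ‖Fi (ind a) x‖ ≤ 1 / (Real.pi * |x|) := by
  have hπ := Real.pi_pos
  have hx' : 0 < |x| := abs_pos.mpr hx
  set c : ℂ := -(2 * (Real.pi : ℂ) * Complex.I * (x : ℂ)) with hc_def
  have hcnorm : ‖c‖ = 2 * Real.pi * |x| := by
    rw [hc_def, norm_neg]
    simp only [norm_mul, Complex.norm_ofNat, Complex.norm_real, Complex.norm_I,
      Real.norm_eq_abs, abs_of_pos hπ]
    ring
  have hc : c ≠ 0 := by
    intro h
    rw [h, norm_zero] at hcnorm
    have : (0:ℝ) < 2 * Real.pi * |x| := by positivity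
    linarith
  have heq : Fi (ind a) x = (Complex.exp (c * a) - Complex.exp (c * (-a : ℝ))) / c := by
    rw [Fi_ind_eq, MeasureTheory.integral_Icc_eq_integral_Ioc,
      ← intervalIntegral.integral_of_le (by linarith : -a ≤ a),
      ← integral_exp_mul_complex hc]
    apply intervalIntegral.integral_congr
    intro y _
    rw [hc_def]
    push_cast
    ring_nf
  rw [heq, norm_div, hcnorm]
  have h2 : ‖Complex.exp (c * a) - Complex.exp (c * (-a : ℝ))‖ ≤ 2 := by
    apply le_trans (norm_sub_le _ _)
    rw [norm_exp_re_zero (by simp [hc_def, Complex.mul_re, Complex.mul_im]),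
      norm_exp_re_zero (by simp [hc_def, Complex.mul_re, Complex.mul_im])]
    norm_num
  calc ‖Complex.exp (c * a) - Complex.exp (c * (-a : ℝ))‖ / (2 * Real.pi * |x|)
      ≤ 2 / (2 * Real.pi * |x|) := by gcongr
    _ = 1 / (Real.pi * |x|) := by field_simp

end base

lemma master {a ε : ℝ} (ha : 0 < a) (hε : 0 < ε) (n : ℕ) (hn : (n:ℝ) * ε < a) :
    ∀ k : ℕ, k ≤ n →
      (∀ c d : ℝ, IntervalIntegrable ((sm ε)^[k] (ind a)) volume c d) ∧
      (Measurable ((sm ε)^[k] (ind a))) ∧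
      (∀ s, 0 ≤ (sm ε)^[k] (ind a) s) ∧
      (∀ s, (sm ε)^[k] (ind a) s ≤ 1) ∧
      (∀ s : ℝ, a + (k:ℝ)*ε < |s| → (sm ε)^[k] (ind a) s = 0) ∧
      (∀ s : ℝ, |s| ≤ a - (k:ℝ)*ε → (sm ε)^[k] (ind a) s = 1) ∧
      (∀ y : ℝ, |y| < a + (k:ℝ)*ε → 0 < (sm ε)^[k] (ind a) y) ∧
      (∀ y : ℝ, a - (k:ℝ)*ε < |y| → (sm ε)^[k] (ind a) y < 1) ∧
      (∀ c d : ℝ, c < d → (∀ t ∈ Set.Ioo c d, |t| < a + (k:ℝ)*ε) →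
        0 < ∫ t in c..d, (sm ε)^[k] (ind a) t) ∧
      (∀ c d : ℝ, c < d → (∀ t ∈ Set.Ioo c d, a - (k:ℝ)*ε < |t|) →
        0 < ∫ t in c..d, (1 - (sm ε)^[k] (ind a) t)) ∧
      (∀ x : ℝ, Fi ((sm ε)^[k] (ind a)) x = (Kf ε x)^k * Fi (ind a) x) := by
  intro k
  induction k with
  | zero =>
    intro _
    simp only [Function.iterate_zero, id_eq, Nat.cast_zero, zero_mul, add_zero, sub_zero,
      pow_zero, one_mul]
    refine ⟨ind_ii a, ind_meas a, ind_nonneg a, ind_le_one a, fun s hs => ind_eq_zero hs,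
      fun s hs => ind_eq_one hs, ?_, ?_, ?_, ?_, fun _ => trivial⟩
    · intro y hy
      rw [ind_eq_one hy.le]
      norm_num
    · intro y hy
      rw [ind_eq_zero hy]
      norm_num
    · intro c d hcd hsub
      exact ind_integral_pos hcd hsub
    · intro c d hcd hsub
      exact ind_one_sub_integral_pos ha hcd hsub
  | succ k ih =>
    intro hk1
    have hk : k ≤ n := le_trans (Nat.le_succ k) hk1
    obtain ⟨hii, hmeas, h0, h1, hz, ho, hp, hl, hP, hT, hF⟩ := ih hk
    set g := (sm ε)^[k] (ind a) with hg_def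
    have hkε : (k:ℝ)*ε + ε ≤ (n:ℝ)*ε := by
      have : (k:ℝ) + 1 ≤ (n:ℝ) := by exact_mod_cast hk1
      nlinarith
    have hka : (k:ℝ)*ε + ε < a := lt_of_le_of_lt hkε hn
    have hk0 : 0 ≤ (k:ℝ)*ε := by positivity
    have hiter : (sm ε)^[k+1] (ind a) = sm ε g := by
      rw [hg_def, Function.iterate_succ_apply']
    rw [hiter]
    have hcont : Continuous (sm ε g) := sm_continuous hii
    have hii' : ∀ c d : ℝ, IntervalIntegrable (sm ε g) volume c d :=
      fun c d => hcont.intervalIntegrable c d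
    have hbd : ∀ u, |g u| ≤ 1 := fun u => abs_le.mpr ⟨by linarith [h0 u], h1 u⟩
    have hcast : ((k+1 : ℕ) : ℝ) * ε = (k:ℝ)*ε + ε := by push_cast; ring
    have hpos' : ∀ y : ℝ, |y| < a + ((k+1:ℕ):ℝ)*ε → 0 < sm ε g y := by
      intro y hy
      rw [hcast] at hy
      exact sm_pos hε (by linarith) hii h0 hP (by rw [show a + ((k:ℝ)*ε + ε) = (a + (k:ℝ)*ε) + ε by ring] at hy; exact hy)
    have hlt1' : ∀ y : ℝ, a - ((k+1:ℕ):ℝ)*ε < |y| → sm ε g y < 1 := by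
      intro y hy
      rw [hcast] at hy
      have hone_sub : 0 < sm ε (fun s => 1 - g s) y := by
        apply sm_pos_tail hε (by linarith : (0:ℝ) ≤ a - (k:ℝ)*ε)
          (fun c d => (_root_.intervalIntegrable_const (c := (1:ℝ))).sub (hii c d))
          (fun s => by linarith [h1 s]) hT
        rw [show a - (k:ℝ)*ε - ε = a - ((k:ℝ)*ε + ε) by ring]
        exact hy
      rw [sm_one_sub hε hii] at hone_sub
      linarith
    refine ⟨hii', hcont.measurable, sm_nonneg hε h0, sm_le_one hε hii h1, ?_, ?_, hpos', hlt1',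
      ?_, ?_, ?_⟩
    · intro s hs
      rw [hcast] at hs
      exact sm_eq_zero_of' hε hii hz
        (by rw [show a + (k:ℝ)*ε + ε = a + ((k:ℝ)*ε + ε) by ring]; linarith)
    · intro s hs
      rw [hcast] at hs
      exact sm_eq_one_of hε ho
        (by rw [show a - (k:ℝ)*ε - ε = a - ((k:ℝ)*ε + ε) by ring]; linarith)
    · intro c d hcd hsub
      exact intervalIntegral.intervalIntegral_pos_of_pos_on (hii' c d)
        (fun t ht => hpos' t (hsub t ht)) hcd
    · intro c d hcd hsub
      apply intervalIntegral.intervalIntegral_pos_of_pos_on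
        ((_root_.intervalIntegrable_const (c := (1:ℝ))).sub (hii' c d))
        (fun t ht => by linarith [hlt1' t (hsub t ht)]) hcd
    · intro x
      rw [Fi_sm hε (by linarith : (0:ℝ) ≤ a + (k:ℝ)*ε) hmeas hbd hz x, hF x, pow_succ]
      ring

end SegalAux

theorem segal_smoothing
    (r : ℕ) (hr : 0 < r) (a δ : ℝ) (hδ : 0 < δ) (hδa : δ < a / 4) :
    ∃ θ : ℝ → ℝ, ContDiff ℝ r θ ∧
      (∀ y : ℝ, |y| ≤ a - δ → θ y = 1) ∧
      (∀ y : ℝ, a - δ < |y| → |y| < a + δ → 0 < θ y ∧ θ y < 1) ∧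
      (∀ y : ℝ, a + δ ≤ |y| → θ y = 0) ∧
      (∀ x : ℝ, x ≠ 0 →
        ‖∫ y : ℝ, (θ y : ℂ) * Complex.exp (-(2 * Real.pi * Complex.I * x * y))‖
          ≤ min (2 * a) (1 / |x| * ((r : ℝ) / (|x| * δ)) ^ r)) := by
  have hπ := Real.pi_pos
  have hπ3 := Real.pi_gt_three
  set n : ℕ := r + 1 with hn_def
  have hn0 : (0:ℝ) < (n:ℝ) := by positivity
  set ε : ℝ := δ / (n:ℝ) with hε_def
  have hε : 0 < ε := div_pos hδ hn0
  have hnε : (n:ℝ) * ε = δ := by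
    rw [hε_def, mul_div_cancel₀ _ (ne_of_gt hn0)]
  have ha : 0 < a := by linarith
  have hna : (n:ℝ) * ε < a := by rw [hnε]; linarith
  obtain ⟨hii, hmeas, h0, h1, hz, ho, hp, hl, hP, hT, hF⟩ :=
    SegalAux.master ha hε n hna n le_rfl
  obtain ⟨hiiR, _, _, _, hzR, _, _, _, _, _, _⟩ :=
    SegalAux.master ha hε n hna r (Nat.le_succ r)
  refine ⟨(SegalAux.sm ε)^[n] (SegalAux.ind a), ?_, ?_, ?_, ?_, ?_⟩
  · rw [show ((SegalAux.sm ε)^[n] (SegalAux.ind a))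
        = (SegalAux.sm ε)^[r] (SegalAux.sm ε (SegalAux.ind a)) from
      Function.iterate_succ_apply (SegalAux.sm ε) r (SegalAux.ind a)]
    exact SegalAux.sm_contDiff_iter (SegalAux.sm_continuous (SegalAux.ind_ii a)) r
  · intro y hy
    apply ho
    rw [hnε]
    exact hy
  · intro y hy1 hy2
    constructor
    · apply hp
      rw [hnε]
      exact hy2
    · apply hl
      rw [hnε]
      exact hy1
  · intro y hy
    rw [Function.iterate_succ_apply' (SegalAux.sm ε) r (SegalAux.ind a)]
    apply SegalAux.sm_eq_zero_of' hε hiiR hzR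
    have : a + (r:ℝ)*ε + ε = a + δ := by
      rw [← hnε, hn_def]
      push_cast
      ring
    linarith
  · intro x hx
    have hxpos : 0 < |x| := abs_pos.mpr hx
    show ‖SegalAux.Fi ((SegalAux.sm ε)^[n] (SegalAux.ind a)) x‖ ≤ _
    rw [hF x, norm_mul, norm_pow]
    have hA1 : ‖SegalAux.Kf ε x‖ ≤ 1 := SegalAux.Kf_norm_le_one hε x
    have hA0 : (0:ℝ) ≤ ‖SegalAux.Kf ε x‖ := norm_nonneg _
    have hA2 : ‖SegalAux.Kf ε x‖ ≤ 1 / (2 * Real.pi * ε * |x|) := SegalAux.Kf_norm_le hε hx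
    have hB1 : ‖SegalAux.Fi (SegalAux.ind a) x‖ ≤ 2 * a := SegalAux.Fi_ind_le_two_a ha x
    have hB2 : ‖SegalAux.Fi (SegalAux.ind a) x‖ ≤ 1 / (Real.pi * |x|) :=
      SegalAux.Fi_ind_le_inv ha hx
    have hB0 : (0:ℝ) ≤ ‖SegalAux.Fi (SegalAux.ind a) x‖ := norm_nonneg _
    apply le_min
    · calc ‖SegalAux.Kf ε x‖^n * ‖SegalAux.Fi (SegalAux.ind a) x‖
          ≤ 1 * (2 * a) := mul_le_mul (pow_le_one₀ hA0 hA1) hB1 hB0 zero_le_one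
        _ = 2 * a := one_mul _
    · have hstep : 1 / (2 * Real.pi * ε * |x|) ≤ (r:ℝ) / (|x| * δ) := by
        rw [div_le_div_iff₀ (by positivity) (by positivity)]
        have hδεn : δ = (n:ℝ) * ε := hnε.symm
        have hrn : (1:ℝ) ≤ (r:ℝ) := by exact_mod_cast hr
        have key : (n:ℝ) ≤ 2 * Real.pi * (r:ℝ) := by
          rw [hn_def]
          push_cast
          nlinarith
        calc 1 * (|x| * δ) = |x| * ((n:ℝ) * ε) := by rw [← hδεn]; ring
          _ ≤ |x| * ((2 * Real.pi * (r:ℝ)) * ε) := by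
              apply mul_le_mul_of_nonneg_left _ (abs_nonneg x)
              exact mul_le_mul_of_nonneg_right key hε.le
          _ = (r:ℝ) * (2 * Real.pi * ε * |x|) := by ring
      have hBx : ‖SegalAux.Fi (SegalAux.ind a) x‖ ≤ 1 / |x| := by
        apply le_trans hB2
        rw [div_le_div_iff₀ (by positivity) hxpos]
        nlinarith
      have hApos : (0:ℝ) ≤ 1 / (2 * Real.pi * ε * |x|) := by positivity
      calc ‖SegalAux.Kf ε x‖^n * ‖SegalAux.Fi (SegalAux.ind a) x‖
          = ‖SegalAux.Kf ε x‖^r * ‖SegalAux.Kf ε x‖ * ‖SegalAux.Fi (SegalAux.ind a) x‖ := by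
            rw [hn_def, pow_succ]
        _ ≤ (1 / (2 * Real.pi * ε * |x|))^r * 1 * (1 / |x|) := by
            apply mul_le_mul _ hBx hB0 (by positivity)
            exact mul_le_mul (pow_le_pow_left₀ hA0 hA2 r) hA1 hA0 (by positivity)
        _ ≤ ((r:ℝ) / (|x| * δ))^r * 1 * (1 / |x|) := by
            apply mul_le_mul_of_nonneg_right _ (by positivity)
            apply mul_le_mul_of_nonneg_right _ zero_le_one
            exact pow_le_pow_left₀ hApos hstep r
        _ = 1 / |x| * ((r:ℝ) / (|x| * δ))^r := by ring
end

section
/- Let $N$ be a positive integer, $\alpha$ a nonzero real, and for integers $n_1, n_2 \in (N/2, N]$ with $n_1 \ne n_2$ suppose $c > 1$. Then for any real $\tau > 0$: $\sum_{N/2 < n_1, n_2 \le N} \min\left(\tau, \frac{1}{|n_1^c - n_2^c|}\right) \ll_c \tau N + N^{2-c}(\log N + 1)$, where terms with $n_1 = n_2$ contribute $\min(\tau, \infty) = \tau$ each. -/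
open Finset

private lemma harm_bound (N : ℕ) :
    ∑ k ∈ Finset.Icc 1 N, ((k : ℝ))⁻¹ ≤ Real.log N + 1 := by
  have h := harmonic_le_one_add_log N
  rw [harmonic_eq_sum_Icc] at h
  push_cast at h
  linarith

private lemma inj_sum (N : ℕ) (s : Finset ℕ) (e : ℕ → ℕ)
    (he : ∀ a ∈ s, ∀ b ∈ s, e a = e b → a = b)
    (hsub : ∀ n ∈ s, e n ∈ Finset.Icc 1 N) :
    ∑ n ∈ s, ((e n : ℝ))⁻¹ ≤ ∑ k ∈ Finset.Icc 1 N, ((k : ℝ))⁻¹ := by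
  have himg : ∑ n ∈ s, ((e n : ℝ))⁻¹ = ∑ k ∈ s.image e, ((k : ℝ))⁻¹ :=
    (Finset.sum_image (f := fun k : ℕ => ((k : ℝ))⁻¹) (g := e) he).symm
  rw [himg]
  refine Finset.sum_le_sum_of_subset_of_nonneg ?_ (fun k _ _ => by positivity)
  intro k hk
  obtain ⟨n, hn, rfl⟩ := Finset.mem_image.1 hk
  exact hsub n hn

private lemma gap_bound (c : ℝ) (hc : 1 < c) {x y : ℝ} (hy : 0 < y) (hxy : y ≤ x) :
    y ^ (c - 1) * (x - y) ≤ x ^ c - y ^ c := by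
  have hs : (0:ℝ) ≤ (x - y)/y := by
    have : 0 ≤ x - y := by linarith
    positivity
  have hb := one_add_mul_self_le_rpow_one_add (by linarith : (-1:ℝ) ≤ (x-y)/y) hc.le
  have h1 : 1 + (x-y)/y = x / y := by field_simp; ring
  rw [h1] at hb
  have hx : 0 < x := lt_of_lt_of_le hy hxy
  have h2 : (x/y) ^ c = x ^ c / y ^ c := Real.div_rpow hx.le hy.le c
  have hyc : 0 < y ^ c := Real.rpow_pos_of_pos hy c
  have key : (1 + c * ((x-y)/y)) * y ^ c ≤ x ^ c := by
    calc (1 + c * ((x-y)/y)) * y ^ c ≤ (x/y) ^ c * y ^ c := by nlinarith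
      _ = x ^ c := by rw [h2]; field_simp
  have h3 : y ^ c / y = y ^ (c-1) := by
    rw [Real.rpow_sub hy, Real.rpow_one]
  have expand : (1 + c * ((x-y)/y)) * y ^ c = y ^ c + c * ((x - y) * (y ^ c / y)) := by
    field_simp
  rw [expand, h3] at key
  have hyc1 : 0 ≤ y ^ (c-1) := (Real.rpow_pos_of_pos hy _).le
  have heq : y ^ (c-1) * (x - y) = (x - y) * y ^ (c-1) := mul_comm _ _
  have hge : (x - y) * y ^ (c-1) ≤ c * ((x - y) * y ^ (c-1)) := by
    nlinarith [mul_nonneg (sub_nonneg.2 hxy) hyc1]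
  linarith

private lemma pt_bound (c : ℝ) (hc : 1 < c) {N : ℝ} (hN : 0 < N) {x y : ℝ}
    (hy : N/2 ≤ y) (hxy : y < x) :
    1 / (x ^ c - y ^ c) ≤ 2 ^ (c-1) * N ^ (1-c) * (1/(x - y)) := by
  have hN2 : (0:ℝ) < N/2 := by linarith
  have hy0 : 0 < y := lt_of_lt_of_le hN2 hy
  have hgap := gap_bound c hc hy0 hxy.le
  have hmono : (N/2) ^ (c-1) ≤ y ^ (c-1) :=
    Real.rpow_le_rpow hN2.le hy (by linarith)
  have hd : 0 < x - y := by linarith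
  have hlow : (N/2) ^ (c-1) * (x-y) ≤ x ^ c - y ^ c := by nlinarith
  have hpos : 0 < (N/2) ^ (c-1) * (x-y) := by
    have := Real.rpow_pos_of_pos hN2 (c-1); positivity
  have h1 : 1 / (x ^ c - y ^ c) ≤ 1 / ((N/2) ^ (c-1) * (x-y)) :=
    one_div_le_one_div_of_le hpos hlow
  refine h1.trans (le_of_eq ?_)
  have hdiv : (N/2) ^ (c-1) = N ^ (c-1) / 2 ^ (c-1) := Real.div_rpow hN.le (by norm_num : (0:ℝ) ≤ 2) (c-1)
  have hNc : N ^ (1-c) = (N ^ (c-1))⁻¹ := by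
    rw [show (1-c) = -(c-1) by ring, Real.rpow_neg hN.le]
  have h2pos : (0:ℝ) < 2 ^ (c-1) := Real.rpow_pos_of_pos (by norm_num) _
  have hNpos : (0:ℝ) < N ^ (c-1) := Real.rpow_pos_of_pos hN _
  rw [hdiv, hNc]
  field_simp

private lemma abs_pt_bound (c : ℝ) (hc : 1 < c) {N : ℝ} (hN : 0 < N) {x y : ℝ}
    (hx : N/2 ≤ x) (hy : N/2 ≤ y) (hne : x ≠ y) :
    1 / |x ^ c - y ^ c| ≤ 2 ^ (c-1) * N ^ (1-c) * (1/|x - y|) := by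
  have hc0 : (0:ℝ) < c := by linarith
  rcases hne.lt_or_gt with h | h
  · have hx0 : 0 < x := lt_of_lt_of_le (by linarith) hx
    have hpow : x ^ c < y ^ c := Real.rpow_lt_rpow hx0.le h hc0
    have := pt_bound c hc hN hx h
    rw [abs_sub_comm, abs_sub_comm x y, abs_of_pos (sub_pos.2 hpow), abs_of_pos (sub_pos.2 h)]
    exact this
  · have hy0 : 0 < y := lt_of_lt_of_le (by linarith) hy
    have hpow : y ^ c < x ^ c := Real.rpow_lt_rpow hy0.le h hc0
    have := pt_bound c hc hN hy h
    rw [abs_of_pos (sub_pos.2 hpow), abs_of_pos (sub_pos.2 h)]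
    exact this

open Finset in
theorem min_sum_estimate (c : ℝ) (hc : 1 < c) :
    ∃ C : ℝ, 0 < C ∧ ∀ (N : ℕ), 0 < N → ∀ (α : ℝ), α ≠ 0 → ∀ (τ : ℝ), 0 < τ →
      ∑ n₁ ∈ Finset.Ioc (N / 2) N, ∑ n₂ ∈ Finset.Ioc (N / 2) N,
        (if n₁ = n₂ then τ else min τ (1 / |(n₁ : ℝ) ^ c - (n₂ : ℝ) ^ c|))
        ≤ C * (τ * N + (N : ℝ) ^ (2 - c) * (Real.log N + 1)) := by
  refine ⟨2 ^ c + 1, by positivity, ?_⟩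
  intro N hN α hα τ hτ
  set M := Finset.Ioc (N / 2) N with hM
  have hNpos : (0:ℝ) < N := by exact_mod_cast hN
  have hlogN : 0 ≤ Real.log N := Real.log_nonneg (by exact_mod_cast hN)
  have hmem : ∀ n ∈ M, (N:ℝ)/2 ≤ (n:ℝ) := by
    intro n hn
    rw [hM, Finset.mem_Ioc] at hn
    have h1 : N + 1 ≤ 2 * n := by omega
    have h2 : ((N:ℝ) + 1) ≤ 2 * n := by exact_mod_cast h1
    linarith
  have inner1 : ∀ n₁ ∈ M, ∑ n₂ ∈ M.erase n₁, (1 / |(n₁:ℝ) - (n₂:ℝ)|)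
      ≤ 2 * (Real.log N + 1) := by
    intro n₁ hn₁
    have hn₁N : n₁ ≤ N := (Finset.mem_Ioc.1 hn₁).2
    rw [← Finset.sum_filter_add_sum_filter_not (M.erase n₁) (· < n₁)]
    have hA : ∑ n₂ ∈ (M.erase n₁).filter (· < n₁), (1 / |(n₁:ℝ) - (n₂:ℝ)|)
        ≤ Real.log N + 1 := by
      have hrw : ∀ n₂ ∈ (M.erase n₁).filter (· < n₁),
          (1 / |(n₁:ℝ) - (n₂:ℝ)|) = (((n₁ - n₂ : ℕ) : ℝ))⁻¹ := by
        intro n₂ hn₂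
        have hlt : n₂ < n₁ := by
          have := (Finset.mem_filter.1 hn₂).2; simpa using this
        have hltR : (n₂:ℝ) < (n₁:ℝ) := by exact_mod_cast hlt
        rw [abs_of_pos (sub_pos.2 hltR), one_div]
        congr 1
        rw [Nat.cast_sub hlt.le]
      rw [Finset.sum_congr rfl hrw]
      refine (inj_sum N _ (fun m => n₁ - m) ?_ ?_).trans (harm_bound N)
      · intro a ha b hb hab
        have ha' : a < n₁ := by have := (Finset.mem_filter.1 ha).2; simpa using this
        have hb' : b < n₁ := by have := (Finset.mem_filter.1 hb).2; simpa using this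
        omega
      · intro n hnmem
        have h1 : n < n₁ := by have := (Finset.mem_filter.1 hnmem).2; simpa using this
        show n₁ - n ∈ Finset.Icc 1 N
        rw [Finset.mem_Icc]
        omega
    have hB : ∑ n₂ ∈ (M.erase n₁).filter (fun n₂ => ¬ n₂ < n₁), (1 / |(n₁:ℝ) - (n₂:ℝ)|)
        ≤ Real.log N + 1 := by
      have hrw : ∀ n₂ ∈ (M.erase n₁).filter (fun n₂ => ¬ n₂ < n₁),
          (1 / |(n₁:ℝ) - (n₂:ℝ)|) = (((n₂ - n₁ : ℕ) : ℝ))⁻¹ := by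
        intro n₂ hn₂
        obtain ⟨hmem', hnlt⟩ := Finset.mem_filter.1 hn₂
        have hne : n₂ ≠ n₁ := Finset.ne_of_mem_erase hmem'
        have hlt : n₁ < n₂ := by omega
        have hltR : (n₁:ℝ) < (n₂:ℝ) := by exact_mod_cast hlt
        rw [abs_sub_comm, abs_of_pos (sub_pos.2 hltR), one_div]
        congr 1
        rw [Nat.cast_sub hlt.le]
      rw [Finset.sum_congr rfl hrw]
      refine (inj_sum N _ (fun m => m - n₁) ?_ ?_).trans (harm_bound N)
      · intro a ha b hb hab
        obtain ⟨haE, haG⟩ := Finset.mem_filter.1 ha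
        obtain ⟨hbE, hbG⟩ := Finset.mem_filter.1 hb
        have : a ≠ n₁ := Finset.ne_of_mem_erase haE
        have : b ≠ n₁ := Finset.ne_of_mem_erase hbE
        omega
      · intro n hnmem
        obtain ⟨hnE, hnG⟩ := Finset.mem_filter.1 hnmem
        have hne : n ≠ n₁ := Finset.ne_of_mem_erase hnE
        have hnN : n ≤ N := (Finset.mem_Ioc.1 (Finset.mem_of_mem_erase hnE)).2
        have hnG' : ¬ n < n₁ := by simpa using hnG
        show n - n₁ ∈ Finset.Icc 1 N
        rw [Finset.mem_Icc]
        omega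
    linarith
  have inner : ∀ n₁ ∈ M,
      ∑ n₂ ∈ M, (if n₁ = n₂ then τ else min τ (1 / |(n₁ : ℝ) ^ c - (n₂ : ℝ) ^ c|))
      ≤ τ + 2 ^ (c-1) * (N:ℝ) ^ (1-c) * (2 * (Real.log N + 1)) := by
    intro n₁ hn₁
    rw [← Finset.add_sum_erase M _ hn₁, if_pos rfl]
    refine add_le_add_right ?_ τ
    calc ∑ n₂ ∈ M.erase n₁, (if n₁ = n₂ then τ else min τ (1 / |(n₁ : ℝ) ^ c - (n₂ : ℝ) ^ c|))
        ≤ ∑ n₂ ∈ M.erase n₁, 2 ^ (c-1) * (N:ℝ) ^ (1-c) * (1 / |(n₁:ℝ) - (n₂:ℝ)|) := by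
          apply Finset.sum_le_sum
          intro n₂ hn₂
          have hne : n₂ ≠ n₁ := Finset.ne_of_mem_erase hn₂
          have hn₂M : n₂ ∈ M := Finset.mem_of_mem_erase hn₂
          rw [if_neg (fun h => hne h.symm)]
          refine (min_le_right _ _).trans ?_
          exact abs_pt_bound c hc hNpos (hmem n₁ hn₁) (hmem n₂ hn₂M)
            (fun h => hne (by exact_mod_cast h.symm))
      _ = 2 ^ (c-1) * (N:ℝ) ^ (1-c) * ∑ n₂ ∈ M.erase n₁, (1 / |(n₁:ℝ) - (n₂:ℝ)|) :=
          (Finset.mul_sum _ _ _).symm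
      _ ≤ 2 ^ (c-1) * (N:ℝ) ^ (1-c) * (2 * (Real.log N + 1)) := by
          refine mul_le_mul_of_nonneg_left (inner1 n₁ hn₁) ?_
          have := Real.rpow_pos_of_pos hNpos (1-c)
          positivity
  have hcard : (M.card : ℝ) ≤ N := by
    have : M.card ≤ N := by rw [hM, Nat.card_Ioc]; omega
    exact_mod_cast this
  set K : ℝ := 2 ^ (c-1) * (N:ℝ) ^ (1-c) * (2 * (Real.log N + 1)) with hK
  have hKnn : 0 ≤ K := by
    have := Real.rpow_pos_of_pos hNpos (1-c)
    have h2 : (0:ℝ) < 2 ^ (c-1) := Real.rpow_pos_of_pos (by norm_num) _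
    positivity
  have hKeq : (N:ℝ) * K = 2 ^ c * ((N:ℝ) ^ (2-c) * (Real.log N + 1)) := by
    have h2c : (2:ℝ) ^ (c-1) * 2 = 2 ^ c := by
      rw [← Real.rpow_add_one (by norm_num : (2:ℝ) ≠ 0) (c-1)]
      norm_num
    have hN2c : (N:ℝ) * (N:ℝ) ^ (1-c) = (N:ℝ) ^ (2-c) := by
      rw [show (2-c : ℝ) = (1-c) + 1 by ring, Real.rpow_add_one (ne_of_gt hNpos)]
      ring
    rw [hK, ← h2c, ← hN2c]
    ring
  have hE : 0 ≤ (N:ℝ) ^ (2-c) * (Real.log N + 1) := by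
    have := Real.rpow_pos_of_pos hNpos (2-c)
    positivity
  have h2cpos : (0:ℝ) < 2 ^ c := Real.rpow_pos_of_pos (by norm_num) _
  calc ∑ n₁ ∈ M, ∑ n₂ ∈ M, (if n₁ = n₂ then τ else min τ (1 / |(n₁ : ℝ) ^ c - (n₂ : ℝ) ^ c|))
      ≤ ∑ _n₁ ∈ M, (τ + K) := Finset.sum_le_sum inner
    _ = M.card * (τ + K) := by rw [Finset.sum_const, nsmul_eq_mul]
    _ ≤ (N:ℝ) * (τ + K) := by
        refine mul_le_mul_of_nonneg_right hcard ?_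
        positivity
    _ = τ * N + (N:ℝ) * K := by ring
    _ = τ * N + 2 ^ c * ((N:ℝ) ^ (2-c) * (Real.log N + 1)) := by rw [hKeq]
    _ ≤ (2 ^ c + 1) * (τ * N + (N : ℝ) ^ (2 - c) * (Real.log N + 1)) := by
        nlinarith [mul_nonneg hτ.le hNpos.le]
end
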